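/- arXiv:2010.06063 — 6 statements merged into one kernel-verified Lean document; each statement's English description precedes it below -/
import Mathlib

section
/- For any real c and positive reals a and b, ∫₀^∞ ∫₀^{τ₂} (c/τ₂) exp(-b τ₁) exp(-a τ₂) dτ₁ dτ₂ = (c/b) · log((a+b)/a). -/
open MeasureTheory
open Real Set

lemma L1 (k T : ℝ) (hk : k ≠ 0) (hT : 0 ≤ T) :
    ∫ t in Ioo 0 T, Real.exp (-k * t) = (1 - Real.exp (-k * T)) / k := by
  rw [← integral_Ioc_eq_integral_Ioo, ← intervalIntegral.integral_of_le hT]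
  have h := intervalIntegral.integral_comp_mul_left (a := (0:ℝ)) (b := T)
    (f := Real.exp) (c := -k) (by simpa using hk)
  simp only [neg_mul] at h ⊢
  rw [h, integral_exp]
  simp only [mul_zero, neg_zero, exp_zero, smul_eq_mul]
  field_simp
  ring

lemma L2 (k : ℝ) (hk : 0 < k) : ∫ x in Ioi (0:ℝ), Real.exp (-k * x) = 1 / k := by
  have h := integral_comp_mul_left_Ioi (fun t => Real.exp (-t)) 0 hk
  simp only [mul_zero, integral_exp_neg_Ioi_zero, smul_eq_mul, mul_one] at h
  simp only [neg_mul]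
  rw [h, one_div]

theorem stmt_3 (c a b : ℝ) (ha : 0 < a) (hb : 0 < b) :
    ∫ τ₂ in Set.Ioi (0:ℝ), ∫ τ₁ in Set.Ioo 0 τ₂,
      (c / τ₂) * Real.exp (-b * τ₁) * Real.exp (-a * τ₂)
      = (c / b) * Real.log ((a + b) / a) := by
  -- Step 1 & 2: rewrite the inner integral
  have hstep : ∀ x ∈ Ioi (0:ℝ),
      ∫ τ₁ in Ioo 0 x, (c / x) * Real.exp (-b * τ₁) * Real.exp (-a * x)
        = (c / b) * ∫ u in Ioo 0 b, Real.exp (-(a + u) * x) := by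
    intro x hx
    have hx0 : (0:ℝ) < x := hx
    have h1 : ∫ τ₁ in Ioo 0 x, (c / x) * Real.exp (-b * τ₁) * Real.exp (-a * x)
        = ((c / x) * Real.exp (-a * x)) * ∫ τ₁ in Ioo 0 x, Real.exp (-b * τ₁) := by
      rw [← MeasureTheory.integral_const_mul _ _]
      congr 1; ext t; ring
    rw [h1, L1 b x hb.ne' hx0.le]
    have h2 : ∫ u in Ioo 0 b, Real.exp (-(a + u) * x)
        = Real.exp (-a * x) * ∫ u in Ioo 0 b, Real.exp (-x * u) := by
      rw [← MeasureTheory.integral_const_mul _ _]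
      congr 1; ext u
      rw [← Real.exp_add]; ring_nf
    rw [h2, L1 x b hx0.ne' hb.le]
    have hxb : Real.exp (-x * b) = Real.exp (-b * x) := by ring_nf
    rw [hxb]
    field_simp
  rw [setIntegral_congr_fun measurableSet_Ioi hstep, MeasureTheory.integral_const_mul _ _]
  -- Step 3: Fubini swap
  have hint : Integrable (fun p : ℝ × ℝ => Real.exp (-(a + p.2) * p.1))
      ((volume.restrict (Ioi (0:ℝ))).prod (volume.restrict (Ioo (0:ℝ) b))) := by
    have hmeas : AEStronglyMeasurable (fun p : ℝ × ℝ => Real.exp (-(a + p.2) * p.1))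
        ((volume.restrict (Ioi (0:ℝ))).prod (volume.restrict (Ioo (0:ℝ) b))) :=
      (Continuous.aestronglyMeasurable (by continuity))
    have hbound : Integrable (fun p : ℝ × ℝ => Real.exp (-a * p.1))
        ((volume.restrict (Ioi (0:ℝ))).prod (volume.restrict (Ioo (0:ℝ) b))) := by
      have h1 : IntegrableOn (fun x : ℝ => Real.exp (-a * x)) (Ioi 0) volume :=
        exp_neg_integrableOn_Ioi 0 ha
      have h2 : Integrable (fun _ : ℝ => (1:ℝ)) (volume.restrict (Ioo (0:ℝ) b)) := by
        exact integrableOn_const measure_Ioo_lt_top.ne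
      simpa using Integrable.mul_prod h1 h2
    refine hbound.mono hmeas ?_
    rw [Measure.prod_restrict]
    filter_upwards [ae_restrict_mem (measurableSet_Ioi.prod measurableSet_Ioo)] with p hp
    obtain ⟨hp1, hp2, _⟩ := hp
    rw [Real.norm_eq_abs, Real.norm_eq_abs, abs_of_pos (Real.exp_pos _),
      abs_of_pos (Real.exp_pos _)]
    apply Real.exp_le_exp.2
    nlinarith [le_of_lt (show (0:ℝ) < p.1 from hp1), le_of_lt hp2]
  rw [MeasureTheory.integral_integral_swap hint]
  -- Step 4: inner integral over x
  have h4 : ∀ u ∈ Ioo (0:ℝ) b,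
      ∫ x in Ioi (0:ℝ), Real.exp (-(a + u) * x) = 1 / (a + u) := fun u hu =>
    L2 (a + u) (by linarith [hu.1])
  rw [setIntegral_congr_fun measurableSet_Ioo h4]
  -- Step 5: compute ∫ u in Ioo 0 b, 1/(a+u)
  have h5 : ∫ u in Ioo (0:ℝ) b, 1 / (a + u) = Real.log ((a + b) / a) := by
    rw [← integral_Ioc_eq_integral_Ioo, ← intervalIntegral.integral_of_le hb.le]
    have := intervalIntegral.integral_comp_add_left (a := (0:ℝ)) (b := b)
      (fun v => 1 / v) a
    rw [add_zero] at this
    rw [show (fun u : ℝ => 1 / (a + u)) = fun u => (fun v => 1/v) (a + u) from rfl, this,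
      integral_one_div]
    intro h
    rcases Set.mem_uIcc.1 h with ⟨h1, _⟩ | ⟨_, h2⟩ <;> linarith
  rw [h5]
end

section
/- For any real c and positive reals a and f, ∫₀^∞ ∫₀^{τ₃} ∫₀^{τ₃} (c/τ₃²) exp(-a τ₁) exp(-f τ₃) dτ₁ dτ₂ dτ₃ = (c/a)(log(a+f) - log f). -/
open MeasureTheory
open Real Set

lemma exp_int (s : ℝ) (hs : 0 < s) : ∫ x in Ioi (0:ℝ), Real.exp (-(s*x)) = 1/s := by
  have h := MeasureTheory.integral_comp_mul_left_Ioi (fun x => Real.exp (-x)) 0 hs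
  simp only [mul_zero, integral_exp_neg_Ioi_zero, smul_eq_mul, mul_one] at h
  rw [one_div, ← h]

lemma exp_ivl (s t : ℝ) (hs : s ≠ 0) :
    ∫ x in (0:ℝ)..t, Real.exp (-(s*x)) = (1 - Real.exp (-(s*t)))/s := by
  have h := intervalIntegral.integral_comp_mul_left (fun x => Real.exp (-x)) (a := 0) (b := t) hs
  simp only [mul_zero, smul_eq_mul] at h
  have h2 := intervalIntegral.integral_comp_neg (a := 0) (b := s*t) (fun x => Real.exp x)
  simp only [neg_zero, integral_exp] at h2
  rw [h, h2, Real.exp_zero]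
  field_simp

lemma frullani {p q : ℝ} (hp : 0 < p) (hpq : p < q) :
    ∫ t in Ioi (0:ℝ), (Real.exp (-(p*t)) - Real.exp (-(q*t)))/t
      = Real.log q - Real.log p := by
  have hq : 0 < q := hp.trans hpq
  -- step 1 : rewrite integrand
  have step1 : ∫ t in Ioi (0:ℝ), (Real.exp (-(p*t)) - Real.exp (-(q*t)))/t
      = ∫ t in Ioi (0:ℝ), ∫ s in Ioc p q, Real.exp (-(s*t)) := by
    refine setIntegral_congr_fun measurableSet_Ioi (fun t ht => ?_)
    have ht0 : (0:ℝ) < t := ht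
    have h := intervalIntegral.integral_comp_mul_left (fun x => Real.exp (-x))
      (a := p) (b := q) ht0.ne'
    simp only [smul_eq_mul] at h
    have h2 := intervalIntegral.integral_comp_neg (a := t*p) (b := t*q) (fun x => Real.exp x)
    simp only [integral_exp] at h2
    rw [← intervalIntegral.integral_of_le hpq.le]
    simp_rw [show ∀ s:ℝ, -(s*t) = -(t*s) by intro s; ring]
    rw [h, h2]
    field_simp
  -- integrability for Fubini
  have hint : Integrable (Function.uncurry fun t s => Real.exp (-(s*t)))
      ((volume.restrict (Ioi (0:ℝ))).prod (volume.restrict (Ioc p q))) := by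
    have hmeas : AEStronglyMeasurable (Function.uncurry fun t s : ℝ => Real.exp (-(s*t)))
        ((volume.restrict (Ioi (0:ℝ))).prod (volume.restrict (Ioc p q))) := by
      have : Continuous fun z : ℝ × ℝ => Real.exp (-(z.2*z.1)) :=
        Real.continuous_exp.comp (continuous_snd.mul continuous_fst).neg
      exact this.aestronglyMeasurable
    have hg : Integrable (fun z : ℝ × ℝ => Real.exp (-(p*z.1)) * 1)
        ((volume.restrict (Ioi (0:ℝ))).prod (volume.restrict (Ioc p q))) := by
      have h1 : Integrable (fun t => Real.exp (-(p*t))) (volume.restrict (Ioi (0:ℝ))) := by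
        simpa [neg_mul, IntegrableOn] using exp_neg_integrableOn_Ioi 0 hp
      have h2 : Integrable (fun _ : ℝ => (1:ℝ)) (volume.restrict (Ioc p q)) :=
        integrableOn_const (by simp [Real.volume_Ioc])
      exact h1.mul_prod h2
    refine hg.mono hmeas ?_
    rw [Measure.prod_restrict]
    filter_upwards [ae_restrict_mem (measurableSet_Ioi.prod measurableSet_Ioc)] with z hz
    obtain ⟨ht, hs⟩ := hz
    simp only [Function.uncurry, norm_mul, Real.norm_eq_abs, abs_of_pos (Real.exp_pos _),
      abs_one, mul_one]
    exact Real.exp_le_exp.mpr (by nlinarith [le_of_lt (mem_Ioi.mp ht), hs.1.le])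
  rw [step1, integral_integral_swap hint]
  have step2 : ∫ s in Ioc p q, ∫ t in Ioi (0:ℝ), Real.exp (-(s*t)) = ∫ s in Ioc p q, 1/s := by
    refine setIntegral_congr_fun measurableSet_Ioc (fun s hs => ?_)
    exact exp_int s (hp.trans hs.1)
  rw [step2, ← intervalIntegral.integral_of_le hpq.le, integral_one_div
    (by simp [Set.uIcc_of_le hpq.le]; intro h; linarith), Real.log_div hq.ne' hp.ne']

theorem stmt_4 (c a f : ℝ) (ha : 0 < a) (hf : 0 < f) :
    ∫ τ₃ in Set.Ioi (0:ℝ), ∫ _τ₂ in Set.Ioo 0 τ₃, ∫ τ₁ in Set.Ioo 0 τ₃,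
      (c / τ₃^2) * Real.exp (-a * τ₁) * Real.exp (-f * τ₃)
      = (c / a) * (Real.log (a + f) - Real.log f) := by
  have key : ∫ τ₃ in Set.Ioi (0:ℝ), ∫ _τ₂ in Set.Ioo 0 τ₃, ∫ τ₁ in Set.Ioo 0 τ₃,
      (c / τ₃^2) * Real.exp (-a * τ₁) * Real.exp (-f * τ₃)
      = ∫ τ₃ in Set.Ioi (0:ℝ),
        (c/a) * ((Real.exp (-(f*τ₃)) - Real.exp (-((a+f)*τ₃)))/τ₃) := by
    refine setIntegral_congr_fun measurableSet_Ioi (fun τ₃ hτ₃ => ?_)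
    have ht : (0:ℝ) < τ₃ := hτ₃
    have inner : ∫ τ₁ in Set.Ioo 0 τ₃,
        (c / τ₃^2) * Real.exp (-a * τ₁) * Real.exp (-f * τ₃)
        = (c / τ₃^2) * ((1 - Real.exp (-(a*τ₃)))/a) * Real.exp (-f * τ₃) := by
      simp_rw [mul_assoc, mul_comm (Real.exp (-a * _)) (Real.exp (-f * τ₃)), ← mul_assoc]
      rw [integral_const_mul]
      have hI : ∫ τ₁ in Set.Ioo 0 τ₃, Real.exp (-a * τ₁) = (1 - Real.exp (-(a*τ₃)))/a := by
        rw [← integral_Ioc_eq_integral_Ioo, ← intervalIntegral.integral_of_le ht.le]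
        simp_rw [neg_mul]
        exact exp_ivl a τ₃ ha.ne'
      rw [hI]; ring
    rw [inner, setIntegral_const, Real.volume_real_Ioo_of_le ht.le, smul_eq_mul, sub_zero]
    have hexp : (1 - Real.exp (-(a*τ₃))) * Real.exp (-(f*τ₃))
        = Real.exp (-(f*τ₃)) - Real.exp (-((a+f)*τ₃)) := by
      rw [sub_mul, one_mul, ← Real.exp_add]
      ring_nf
    rw [← hexp, neg_mul]
    field_simp
  rw [key, integral_const_mul, frullani hf (by linarith)]
end

section
/- For any real c and positive reals a, b, f, ∫₀^∞ ∫₀^{τ₃} ∫₀^{τ₃} (c/τ₃²) exp(-a τ₁) exp(-b τ₂) exp(-f τ₃) dτ₁ dτ₂ dτ₃ = (c/(ab)) · (f·log f − (a+f)·log(a+f) − (b+f)·log(b+f) + (a+b+f)·log(a+b+f)). -/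
open MeasureTheory

-- ∫₀^t e^{-cx} dx = (1 - e^{-ct})/c
lemma expInt {c t : ℝ} (hc : 0 < c) (ht : 0 < t) :
    ∫ x in Set.Ioo 0 t, Real.exp (-c * x) = (1 - Real.exp (-c * t)) / c := by
  rw [← MeasureTheory.integral_Ioc_eq_integral_Ioo, ← intervalIntegral.integral_of_le ht.le]
  have hd : ∀ x ∈ Set.uIcc (0:ℝ) t, HasDerivAt (fun x => -(Real.exp (-c * x) / c))
      (Real.exp (-c * x)) x := by
    intro x _
    have h1 : HasDerivAt (fun x : ℝ => -c * x) (-c) x := by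
      simpa using (hasDerivAt_id x).const_mul (-c)
    have h2 := (h1.exp.div_const c).neg
    exact h2.congr_deriv (by rw [mul_neg, neg_div, neg_neg, mul_div_assoc, div_self hc.ne', mul_one])
  rw [intervalIntegral.integral_eq_sub_of_hasDerivAt hd
    (Continuous.intervalIntegrable (by continuity) 0 t)]
  simp [mul_comm]
  ring

-- ∫₀^∞ e^{-cτ} dτ = 1/c
lemma expIntIoi {c : ℝ} (hc : 0 < c) :
    ∫ τ in Set.Ioi (0:ℝ), Real.exp (-c * τ) = 1 / c := by
  have hd : ∀ x ∈ Set.Ici (0:ℝ), HasDerivAt (fun x => -(Real.exp (-c * x) / c))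
      (Real.exp (-c * x)) x := by
    intro x _
    have h1 : HasDerivAt (fun x : ℝ => -c * x) (-c) x := by
      simpa using (hasDerivAt_id x).const_mul (-c)
    have h2 := (h1.exp.div_const c).neg
    exact h2.congr_deriv (by rw [mul_neg, neg_div, neg_neg, mul_div_assoc, div_self hc.ne', mul_one])
  have ht : Filter.Tendsto (fun x => -(Real.exp (-c * x) / c)) Filter.atTop (nhds 0) := by
    have h0 : Filter.Tendsto (fun x : ℝ => Real.exp (-(c * x))) Filter.atTop (nhds 0) :=
      Real.tendsto_exp_neg_atTop_nhds_zero.comp (Filter.tendsto_id.const_mul_atTop hc)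
    have : Filter.Tendsto (fun x : ℝ => -(Real.exp (-c * x) / c)) Filter.atTop
        (nhds (-(0 / c))) := by
      simp_rw [neg_mul]
      exact (h0.div_const c).neg
    simpa using this
  have := integral_Ioi_of_hasDerivAt_of_tendsto' hd (exp_neg_integrableOn_Ioi 0 hc) ht
  rw [this]
  simp

-- (1 - e^{-cτ})/τ = ∫₀^c e^{-sτ} ds
lemma sepInt {c τ : ℝ} (hc : 0 < c) (hτ : 0 < τ) :
    (1 - Real.exp (-c * τ)) / τ = ∫ s in Set.Ioo 0 c, Real.exp (-s * τ) := by
  simp_rw [show ∀ s, -s * τ = -τ * s from fun s => by ring]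
  rw [expInt hτ hc, mul_comm]

-- ∫₀^a log(s+q) ds
lemma logInt {q a : ℝ} (hq : 0 < q) (ha : 0 < a) :
    ∫ s in Set.Ioo 0 a, Real.log (s + q) = (a + q) * Real.log (a + q) - q * Real.log q - a := by
  rw [← MeasureTheory.integral_Ioc_eq_integral_Ioo, ← intervalIntegral.integral_of_le ha.le]
  have hd : ∀ x ∈ Set.uIcc (0:ℝ) a, HasDerivAt (fun s => (s + q) * Real.log (s + q) - (s + q))
      (Real.log (x + q)) x := by
    intro x hx
    rw [Set.uIcc_of_le ha.le] at hx
    have hxq : 0 < x + q := by have := hx.1; linarith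
    have h1 : HasDerivAt (fun s : ℝ => s + q) 1 x := (hasDerivAt_id x).add_const q
    have h2 := (h1.mul (h1.log hxq.ne')).sub h1
    exact h2.congr_deriv (by rw [one_mul, mul_one_div_cancel hxq.ne', add_sub_cancel_right])
  have hcont : ContinuousOn (fun x => Real.log (x + q)) (Set.uIcc 0 a) := by
    apply ContinuousOn.log (by fun_prop)
    intro x hx
    rw [Set.uIcc_of_le ha.le] at hx
    have := hx.1; positivity
  rw [intervalIntegral.integral_eq_sub_of_hasDerivAt hd
    (hcont.intervalIntegrable)]
  simp [Real.log_zero]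
  ring

lemma invInt {p b : ℝ} (hp : 0 < p) (hb : 0 < b) :
    ∫ t in Set.Ioo 0 b, 1 / (t + p) = Real.log (b + p) - Real.log p := by
  rw [← MeasureTheory.integral_Ioc_eq_integral_Ioo, ← intervalIntegral.integral_of_le hb.le]
  have hd : ∀ x ∈ Set.uIcc (0:ℝ) b, HasDerivAt (fun t => Real.log (t + p))
      (1 / (x + p)) x := by
    intro x hx
    rw [Set.uIcc_of_le hb.le] at hx
    have hxp : 0 < x + p := by have := hx.1; linarith
    have h1 : HasDerivAt (fun t : ℝ => t + p) 1 x := (hasDerivAt_id x).add_const p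
    simpa [one_div] using h1.log hxp.ne'
  have hcont : ContinuousOn (fun x => 1 / (x + p)) (Set.uIcc 0 b) := by
    apply ContinuousOn.div continuousOn_const (by fun_prop)
    intro x hx
    rw [Set.uIcc_of_le hb.le] at hx
    have := hx.1; positivity
  rw [intervalIntegral.integral_eq_sub_of_hasDerivAt hd hcont.intervalIntegrable, zero_add]

-- Frullani-type
lemma frul {b p : ℝ} (hb : 0 < b) (hp : 0 < p) :
    ∫ τ in Set.Ioi (0:ℝ), (1 - Real.exp (-b * τ)) / τ * Real.exp (-p * τ)
      = Real.log (b + p) - Real.log p := by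
  have key : ∀ τ ∈ Set.Ioi (0:ℝ), (1 - Real.exp (-b * τ)) / τ * Real.exp (-p * τ)
      = ∫ t in Set.Ioo 0 b, Real.exp (-(t + p) * τ) := by
    intro τ hτ
    rw [sepInt hb hτ, ← MeasureTheory.integral_mul_const]
    apply MeasureTheory.setIntegral_congr_fun measurableSet_Ioo
    intro t _
    simp only [← Real.exp_add]
    ring_nf
  rw [MeasureTheory.setIntegral_congr_fun measurableSet_Ioi key]
  -- swap
  have hint : Integrable (Function.uncurry fun τ t => Real.exp (-(t + p) * τ))
      ((volume.restrict (Set.Ioi (0:ℝ))).prod (volume.restrict (Set.Ioo 0 b))) := by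
    have hdom : Integrable (fun z : ℝ × ℝ => Real.exp (-p * z.1) * 1)
        ((volume.restrict (Set.Ioi (0:ℝ))).prod (volume.restrict (Set.Ioo 0 b))) :=
      Integrable.mul_prod (exp_neg_integrableOn_Ioi 0 hp) (integrable_const 1)
    apply hdom.mono
    · apply Measurable.aestronglyMeasurable
      fun_prop
    · rw [Measure.prod_restrict]
      filter_upwards [ae_restrict_mem (measurableSet_Ioi.prod measurableSet_Ioo)] with z hz
      obtain ⟨hz1, hz2⟩ := hz
      simp only [Function.uncurry, Real.norm_eq_abs, Real.abs_exp, mul_one]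
      apply Real.exp_le_exp.2
      have h1 : (0:ℝ) < z.1 := hz1
      have h2 : (0:ℝ) < z.2 := hz2.1
      nlinarith
  rw [MeasureTheory.integral_integral_swap hint]
  rw [MeasureTheory.setIntegral_congr_fun measurableSet_Ioo
    (fun t ht => expIntIoi (by have := ht.1; linarith : (0:ℝ) < t + p))]
  exact invInt hp hb

lemma intOnLog {q a : ℝ} (hq : 0 < q) (ha : 0 < a) :
    IntegrableOn (fun s => Real.log (s + q)) (Set.Ioo 0 a) := by
  apply ContinuousOn.integrableOn_Icc (a := 0) (b := a) ?_ |>.mono_set Set.Ioo_subset_Icc_self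
  apply ContinuousOn.log (by fun_prop)
  intro x hx
  have := hx.1; positivity


theorem stmt_5 (c a b f : ℝ) (ha : 0 < a) (hb : 0 < b) (hf : 0 < f) :
    ∫ τ₃ in Set.Ioi (0:ℝ), ∫ τ₂ in Set.Ioo 0 τ₃, ∫ τ₁ in Set.Ioo 0 τ₃,
      (c / τ₃^2) * Real.exp (-a * τ₁) * Real.exp (-b * τ₂) * Real.exp (-f * τ₃)
      = (c / (a * b)) *
        (f * Real.log f - (a + f) * Real.log (a + f)
          - (b + f) * Real.log (b + f) + (a + b + f) * Real.log (a + b + f)) := by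
  have key : ∀ τ₃ ∈ Set.Ioi (0:ℝ),
      (∫ τ₂ in Set.Ioo 0 τ₃, ∫ τ₁ in Set.Ioo 0 τ₃,
        (c / τ₃^2) * Real.exp (-a * τ₁) * Real.exp (-b * τ₂) * Real.exp (-f * τ₃))
      = (c/(a*b)) * ((1 - Real.exp (-a*τ₃))/τ₃ *
          ((1 - Real.exp (-b*τ₃))/τ₃ * Real.exp (-f*τ₃))) := by
    intro τ₃ hτ
    have hτ : (0:ℝ) < τ₃ := hτ
    have e1 : ∀ τ₂ τ₁ : ℝ, (c / τ₃^2) * Real.exp (-a * τ₁) * Real.exp (-b * τ₂) *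
          Real.exp (-f * τ₃)
        = Real.exp (-a * τ₁) * ((c / τ₃^2) * Real.exp (-b * τ₂) * Real.exp (-f * τ₃)) :=
      fun _ _ => by ring
    simp_rw [e1, MeasureTheory.integral_mul_const, expInt ha hτ]
    have e2 : ∀ τ₂ : ℝ, (1 - Real.exp (-a * τ₃)) / a *
          ((c / τ₃^2) * Real.exp (-b * τ₂) * Real.exp (-f * τ₃))
        = Real.exp (-b * τ₂) *
          ((1 - Real.exp (-a * τ₃)) / a * ((c / τ₃^2) * Real.exp (-f * τ₃))) :=
      fun _ => by ring
    simp_rw [e2, MeasureTheory.integral_mul_const, expInt hb hτ]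
    field_simp
  rw [MeasureTheory.setIntegral_congr_fun measurableSet_Ioi key,
    MeasureTheory.integral_const_mul]
  congr 1
  have key2 : ∀ τ ∈ Set.Ioi (0:ℝ),
      (1 - Real.exp (-a*τ))/τ * ((1 - Real.exp (-b*τ))/τ * Real.exp (-f*τ))
      = ∫ s in Set.Ioo 0 a,
          Real.exp (-s*τ) * ((1 - Real.exp (-b*τ))/τ * Real.exp (-f*τ)) := by
    intro τ hτ
    rw [sepInt ha hτ]
    exact (MeasureTheory.integral_mul_const _ _).symm
  rw [MeasureTheory.setIntegral_congr_fun measurableSet_Ioi key2]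
  have hint : Integrable (Function.uncurry fun τ s =>
      Real.exp (-s*τ) * ((1 - Real.exp (-b*τ))/τ * Real.exp (-f*τ)))
      ((volume.restrict (Set.Ioi (0:ℝ))).prod (volume.restrict (Set.Ioo 0 a))) := by
    have hdom : Integrable (fun z : ℝ × ℝ => b * Real.exp (-f * z.1) * 1)
        ((volume.restrict (Set.Ioi (0:ℝ))).prod (volume.restrict (Set.Ioo 0 a))) :=
      Integrable.mul_prod ((exp_neg_integrableOn_Ioi 0 hf).const_mul b) (integrable_const 1)
    apply hdom.mono
    · apply Measurable.aestronglyMeasurable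
      fun_prop
    · rw [Measure.prod_restrict]
      filter_upwards [ae_restrict_mem (measurableSet_Ioi.prod measurableSet_Ioo)] with z hz
      obtain ⟨hz1, hz2⟩ := hz
      have ht : (0:ℝ) < z.1 := hz1
      have hs : (0:ℝ) < z.2 := hz2.1
      have he1 : 1 - b * z.1 ≤ Real.exp (-b * z.1) := by
        have := Real.add_one_le_exp (-(b * z.1)); rw [neg_mul]; linarith
      have he2 : Real.exp (-b * z.1) ≤ 1 := Real.exp_le_one_iff.2 (by nlinarith)
      have he3 : Real.exp (-z.2 * z.1) ≤ 1 := Real.exp_le_one_iff.2 (by nlinarith)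
      have hX : 0 ≤ (1 - Real.exp (-b*z.1))/z.1 * Real.exp (-f*z.1) := by
        apply mul_nonneg (div_nonneg (by linarith) ht.le) (Real.exp_pos _).le
      simp only [Function.uncurry, Real.norm_eq_abs, mul_one]
      rw [abs_of_nonneg (mul_nonneg (Real.exp_pos _).le hX)]
      calc Real.exp (-z.2*z.1) * ((1 - Real.exp (-b*z.1))/z.1 * Real.exp (-f*z.1))
          ≤ 1 * ((1 - Real.exp (-b*z.1))/z.1 * Real.exp (-f*z.1)) := by
            apply mul_le_mul_of_nonneg_right he3 hX
        _ ≤ b * Real.exp (-f * z.1) := by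
            rw [one_mul]
            apply mul_le_mul_of_nonneg_right ?_ (Real.exp_pos _).le
            rw [div_le_iff₀ ht]
            nlinarith
        _ ≤ |b * Real.exp (-f * z.1)| := le_abs_self _
  rw [MeasureTheory.integral_integral_swap hint]
  have key3 : ∀ s ∈ Set.Ioo (0:ℝ) a,
      (∫ τ in Set.Ioi (0:ℝ),
        Real.exp (-s*τ) * ((1 - Real.exp (-b*τ))/τ * Real.exp (-f*τ)))
      = Real.log (s + (b+f)) - Real.log (s + f) := by
    intro s hs
    have hsf : 0 < s + f := by have := hs.1; linarith
    have e3 : ∀ τ ∈ Set.Ioi (0:ℝ),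
        Real.exp (-s*τ) * ((1 - Real.exp (-b*τ))/τ * Real.exp (-f*τ))
        = (1 - Real.exp (-b*τ))/τ * Real.exp (-(s+f)*τ) := by
      intro τ _
      rw [show (-(s+f)*τ) = (-s*τ) + (-f*τ) by ring, Real.exp_add]; ring
    rw [MeasureTheory.setIntegral_congr_fun measurableSet_Ioi e3, frul hb hsf,
      show b + (s+f) = s + (b+f) by ring]
  rw [MeasureTheory.setIntegral_congr_fun measurableSet_Ioo key3,
    MeasureTheory.integral_sub (intOnLog (by linarith) ha) (intOnLog hf ha),
    logInt (by linarith : (0:ℝ) < b + f) ha, logInt hf ha,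
    show a + (b+f) = a+b+f by ring]
  ring
end

section
/- For any real c and positive reals a, f, ∫₀^∞ ∫₀^{τ₃} ∫₀^{τ₂} (c/τ₃²) exp(-a τ₁) exp(-f τ₃) dτ₁ dτ₂ dτ₃ = (c(a+f)/a²)(log(a+f) − log f) − c/a. -/
open MeasureTheory Set Real Filter


lemma my1 {a : ℝ} (ha : a ≠ 0) {t : ℝ} (ht : 0 ≤ t) :
    ∫ x in Set.Ioo 0 t, Real.exp (-(a*x)) = (1 - Real.exp (-(a*t)))/a := by
  rw [← MeasureTheory.integral_Ioc_eq_integral_Ioo, ← intervalIntegral.integral_of_le ht]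
  have hd : ∀ x ∈ Set.uIcc 0 t,
      HasDerivAt (fun y => -(Real.exp (-(a*y))/a)) (Real.exp (-(a*x))) x := by
    intro x _
    have h : HasDerivAt (fun y => -(Real.exp (-(a*y))/a)) _ x :=
      (((hasDerivAt_id x).const_mul a).neg.exp.div_const a).neg
    convert h using 1
    simp only [Pi.neg_apply, id]
    field_simp
  rw [intervalIntegral.integral_eq_sub_of_hasDerivAt hd
    ((Real.continuous_exp.comp ((continuous_const.mul continuous_id).neg)).intervalIntegrable _ _)]
  simp
  field_simp
  ring

lemma my2 {a : ℝ} (ha : a ≠ 0) {t : ℝ} (ht : 0 ≤ t) :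
    ∫ x in Set.Ioo 0 t, (1 - Real.exp (-(a*x)))/a = t/a + Real.exp (-(a*t))/a^2 - 1/a^2 := by
  rw [← MeasureTheory.integral_Ioc_eq_integral_Ioo, ← intervalIntegral.integral_of_le ht]
  have hd : ∀ x ∈ Set.uIcc 0 t,
      HasDerivAt (fun y => y/a + Real.exp (-(a*y))/a^2) ((1 - Real.exp (-(a*x)))/a) x := by
    intro x _
    have h : HasDerivAt (fun y => y/a + Real.exp (-(a*y))/a^2) _ x := ((hasDerivAt_id x).div_const a).add
      (((hasDerivAt_id x).const_mul a).neg.exp.div_const (a^2))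
    convert h using 1
    simp only [Pi.neg_apply, id]
    field_simp
    ring
  rw [intervalIntegral.integral_eq_sub_of_hasDerivAt hd
    (((continuous_const.sub (Real.continuous_exp.comp
      ((continuous_const.mul continuous_id).neg))).div_const a).intervalIntegrable _ _)]
  simp

lemma my3 {f a τ : ℝ} (ha : 0 ≤ a) (hτ : 0 < τ) :
    ∫ u in Set.Ioo 0 a, (a-u)*Real.exp (-((f+u)*τ))
      = Real.exp (-(f*τ))*(a*τ - 1 + Real.exp (-(a*τ)))/τ^2 := by
  rw [← MeasureTheory.integral_Ioc_eq_integral_Ioo, ← intervalIntegral.integral_of_le ha]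
  have hd : ∀ u ∈ Set.uIcc 0 a,
      HasDerivAt (fun y => Real.exp (-((f+y)*τ)) * (1/τ^2 - (a-y)/τ))
        ((a-u)*Real.exp (-((f+u)*τ))) u := by
    intro u _
    have h1 : HasDerivAt (fun y : ℝ => Real.exp (-((f+y)*τ))) (Real.exp (-((f+u)*τ)) * (-(1*τ))) u :=
      (((hasDerivAt_id u).const_add f).mul_const τ).neg.exp
    have h2 : HasDerivAt (fun y : ℝ => 1/τ^2 - (a-y)/τ) (-(-1/τ)) u :=
      (((hasDerivAt_id u).const_sub a).div_const τ).const_sub (1/τ^2)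
    have h : HasDerivAt (fun y => Real.exp (-((f+y)*τ)) * (1/τ^2 - (a-y)/τ)) _ u := h1.mul h2
    convert h using 1
    field_simp
    ring
  rw [intervalIntegral.integral_eq_sub_of_hasDerivAt hd
    (((continuous_const.sub continuous_id).mul (Real.continuous_exp.comp
      (((continuous_const.add continuous_id).mul continuous_const).neg))).intervalIntegrable _ _)]
  rw [show -((f+a)*τ) = -(f*τ) + -(a*τ) by ring, Real.exp_add]
  field_simp
  ring

lemma my4 {b : ℝ} (hb : 0 < b) : ∫ τ in Set.Ioi (0:ℝ), Real.exp (-(b*τ)) = 1/b := by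
  have hd : ∀ x ∈ Set.Ici (0:ℝ),
      HasDerivAt (fun y => -(Real.exp (-(b*y))/b)) (Real.exp (-(b*x))) x := by
    intro x _
    have h : HasDerivAt (fun y => -(Real.exp (-(b*y))/b)) _ x :=
      (((hasDerivAt_id x).const_mul b).neg.exp.div_const b).neg
    convert h using 1
    simp only [Pi.neg_apply, id]
    field_simp
  have hint : IntegrableOn (fun τ => Real.exp (-(b*τ))) (Set.Ioi (0:ℝ)) := by
    simpa [neg_mul] using exp_neg_integrableOn_Ioi 0 hb
  have htend : Tendsto (fun y => -(Real.exp (-(b*y))/b)) atTop (nhds 0) := by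
    have : Tendsto (fun y : ℝ => Real.exp (-(b*y))) atTop (nhds 0) := by
      have := Real.tendsto_exp_neg_atTop_nhds_zero.comp
        (Filter.Tendsto.const_mul_atTop hb tendsto_id)
      simpa [Function.comp_def] using this
    simpa using (this.div_const b).neg
  have := MeasureTheory.integral_Ioi_of_hasDerivAt_of_tendsto'
    (fun x hx => hd x hx) hint htend
  rw [this]
  simp

lemma my5 {a f : ℝ} (ha : 0 ≤ a) (hf : 0 < f) :
    ∫ u in Set.Ioo 0 a, (a-u)/(f+u) = (a+f)*(Real.log (a+f) - Real.log f) - a := by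
  rw [← MeasureTheory.integral_Ioc_eq_integral_Ioo, ← intervalIntegral.integral_of_le ha]
  have hd : ∀ u ∈ Set.uIcc 0 a,
      HasDerivAt (fun y => (a+f)*Real.log (f+y) - y) ((a-u)/(f+u)) u := by
    intro u hu
    rw [Set.uIcc_of_le ha] at hu
    have hne : f + u ≠ 0 := by nlinarith [hu.1]
    have h : HasDerivAt (fun y => (a+f)*Real.log (f+y) - y) _ u :=
      ((((hasDerivAt_id u).const_add f).log hne).const_mul (a+f)).sub (hasDerivAt_id u)
    convert h using 1
    simp only [id]
    field_simp
    ring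
  have hcont : ContinuousOn (fun u => (a-u)/(f+u)) (Set.uIcc 0 a) := by
    apply ContinuousOn.div (by fun_prop) (by fun_prop)
    intro u hu
    rw [Set.uIcc_of_le ha] at hu
    nlinarith [hu.1]
  rw [intervalIntegral.integral_eq_sub_of_hasDerivAt hd (hcont.intervalIntegrable)]
  rw [show f + a = a + f by ring]
  simp
  ring

lemma key {a f : ℝ} (ha : 0 < a) (hf : 0 < f) :
    ∫ τ in Set.Ioi (0:ℝ), Real.exp (-(f*τ))*(a*τ - 1 + Real.exp (-(a*τ)))/τ^2
      = (a+f)*(Real.log (a+f) - Real.log f) - a := by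
  set h : ℝ → ℝ := fun τ => Real.exp (-(f*τ))*(a*τ - 1 + Real.exp (-(a*τ)))/τ^2 with hh
  set G : ℝ → ℝ → ℝ := fun τ u => (a-u)*Real.exp (-((f+u)*τ)) with hG
  have hGcont : Continuous (fun p : ℝ×ℝ => (a - p.2)*Real.exp (-((f+p.2)*p.1))) := by fun_prop
  have hGm : Measurable (Function.uncurry fun τ u => ENNReal.ofReal (G τ u)) :=
    (ENNReal.continuous_ofReal.comp hGcont).measurable
  -- nonnegativity of h on Ioi 0
  have hnn : ∀ τ ∈ Set.Ioi (0:ℝ), 0 ≤ h τ := by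
    intro τ hτ
    have := Real.add_one_le_exp (-(a*τ))
    apply div_nonneg (mul_nonneg (Real.exp_nonneg _) (by linarith)) (sq_nonneg τ)
  -- step 1
  have step1 : ∀ τ ∈ Set.Ioi (0:ℝ),
      ∫⁻ u in Set.Ioo 0 a, ENNReal.ofReal (G τ u) = ENNReal.ofReal (h τ) := by
    intro τ hτ
    rw [← ofReal_integral_eq_lintegral_ofReal]
    · rw [hG, my3 ha.le hτ]
    · exact ((((continuous_const.sub continuous_id).mul (Real.continuous_exp.comp
        (((continuous_const.add continuous_id).mul continuous_const).neg))).integrableOn_Icc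
        ).mono_set Set.Ioo_subset_Icc_self)
    · refine (ae_restrict_iff' measurableSet_Ioo).mpr (ae_of_all _ fun u hu => ?_)
      exact mul_nonneg (by linarith [hu.2]) (Real.exp_nonneg _)
  -- step 2
  have step2 : ∀ u ∈ Set.Ioo (0:ℝ) a,
      ∫⁻ τ in Set.Ioi (0:ℝ), ENNReal.ofReal (G τ u) = ENNReal.ofReal ((a-u)/(f+u)) := by
    intro u hu
    have hfu : 0 < f + u := by linarith [hu.1]
    rw [← ofReal_integral_eq_lintegral_ofReal]
    · congr 1
      simp only [hG]
      rw [MeasureTheory.integral_const_mul, my4 hfu]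
      field_simp
    · have : IntegrableOn (fun τ => Real.exp (-((f+u)*τ))) (Set.Ioi (0:ℝ)) := by
        have := exp_neg_integrableOn_Ioi 0 hfu
        refine this.congr_fun (fun τ _ => by ring_nf) measurableSet_Ioi
      exact this.const_mul _
    · exact ae_of_all _ fun τ => mul_nonneg (by linarith [hu.2]) (Real.exp_nonneg _)
  have hmeas : AEStronglyMeasurable h (volume.restrict (Set.Ioi (0:ℝ))) := by
    apply Measurable.aestronglyMeasurable; fun_prop
  calc ∫ τ in Set.Ioi (0:ℝ), h τ
      = (∫⁻ τ in Set.Ioi (0:ℝ), ENNReal.ofReal (h τ)).toReal := by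
        rw [integral_eq_lintegral_of_nonneg_ae
          ((ae_restrict_iff' measurableSet_Ioi).mpr (ae_of_all _ hnn)) hmeas]
    _ = (∫⁻ τ in Set.Ioi (0:ℝ), ∫⁻ u in Set.Ioo 0 a, ENNReal.ofReal (G τ u)).toReal := by
        rw [setLIntegral_congr_fun measurableSet_Ioi step1]
    _ = (∫⁻ u in Set.Ioo 0 a, ∫⁻ τ in Set.Ioi (0:ℝ), ENNReal.ofReal (G τ u)).toReal := by
        rw [lintegral_lintegral_swap hGm.aemeasurable]
    _ = (∫⁻ u in Set.Ioo 0 a, ENNReal.ofReal ((a-u)/(f+u))).toReal := by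
        rw [setLIntegral_congr_fun measurableSet_Ioo step2]
    _ = (ENNReal.ofReal (∫ u in Set.Ioo 0 a, (a-u)/(f+u))).toReal := by
        rw [ofReal_integral_eq_lintegral_ofReal]
        · exact ((ContinuousOn.div (by fun_prop) (by fun_prop)
            (fun u hu => by rw [Set.mem_Icc] at hu; nlinarith [hu.1])).integrableOn_Icc
            ).mono_set Set.Ioo_subset_Icc_self
        · refine (ae_restrict_iff' measurableSet_Ioo).mpr (ae_of_all _ fun u hu => ?_)
          exact div_nonneg (by linarith [hu.2]) (by linarith [hu.1])
    _ = ∫ u in Set.Ioo 0 a, (a-u)/(f+u) := by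
        rw [ENNReal.toReal_ofReal]
        exact setIntegral_nonneg measurableSet_Ioo fun u hu =>
          div_nonneg (by linarith [hu.2]) (by linarith [hu.1])
    _ = (a+f)*(Real.log (a+f) - Real.log f) - a := my5 ha.le hf

theorem stmt_6 (c a f : ℝ) (ha : 0 < a) (hf : 0 < f) :
    ∫ τ₃ in Set.Ioi (0:ℝ), ∫ τ₂ in Set.Ioo 0 τ₃, ∫ τ₁ in Set.Ioo 0 τ₂,
      (c / τ₃^2) * Real.exp (-a * τ₁) * Real.exp (-f * τ₃)
      = (c * (a + f) / a^2) * (Real.log (a + f) - Real.log f) - c / a := by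
  have hstep : ∀ τ₃ ∈ Set.Ioi (0:ℝ),
      (∫ τ₂ in Set.Ioo 0 τ₃, ∫ τ₁ in Set.Ioo 0 τ₂,
        (c / τ₃^2) * Real.exp (-a * τ₁) * Real.exp (-f * τ₃))
        = (c/a^2) * (Real.exp (-(f*τ₃))*(a*τ₃ - 1 + Real.exp (-(a*τ₃)))/τ₃^2) := by
    intro τ₃ hτ₃
    have hτ3 : (0:ℝ) < τ₃ := hτ₃
    have hin : ∀ τ₂ ∈ Set.Ioo (0:ℝ) τ₃,
        (∫ τ₁ in Set.Ioo 0 τ₂, (c / τ₃^2) * Real.exp (-a * τ₁) * Real.exp (-f * τ₃))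
          = (c/τ₃^2*Real.exp (-f*τ₃)) * ((1 - Real.exp (-(a*τ₂)))/a) := by
      intro τ₂ hτ₂
      rw [show (fun τ₁ => (c / τ₃^2) * Real.exp (-a * τ₁) * Real.exp (-f * τ₃))
          = fun τ₁ => (c/τ₃^2*Real.exp (-f*τ₃)) * Real.exp (-(a*τ₁)) by
        funext τ₁; rw [neg_mul]; ring]
      rw [MeasureTheory.integral_const_mul, my1 ha.ne' hτ₂.1.le]
    rw [MeasureTheory.setIntegral_congr_fun measurableSet_Ioo hin,
      MeasureTheory.integral_const_mul, my2 ha.ne' hτ3.le]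
    simp only [neg_mul]
    field_simp
    ring
  rw [MeasureTheory.setIntegral_congr_fun measurableSet_Ioi hstep,
    MeasureTheory.integral_const_mul, key ha hf]
  field_simp
end

section
/- For any real c and positive reals b, f, ∫₀^∞ ∫₀^{τ₃} ∫₀^{τ₂} (c/τ₃²) exp(-b τ₂) exp(-f τ₃) dτ₁ dτ₂ dτ₃ = c/b + (c f / b²)(log f − log(b+f)). -/
open MeasureTheory

lemma antider {a : ℝ} (ha : 0 < a) (T : ℝ) :
    ∫ x in (0:ℝ)..T, x * Real.exp (-a*x)
      = (1 - Real.exp (-a*T)*(1+a*T))/a^2 := by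
  have key : ∀ x : ℝ, HasDerivAt (fun y => (1 - Real.exp (-a*y)*(1+a*y))/a^2)
      (x * Real.exp (-a*x)) x := by
    intro x
    have h1 : HasDerivAt (fun y : ℝ => -a*y) (-a) x := by
      simpa using (hasDerivAt_id x).const_mul (-a)
    have h2 : HasDerivAt (fun y : ℝ => 1 + a*y) a x := by
      simpa using ((hasDerivAt_id x).const_mul a).const_add 1
    have h3 := ((hasDerivAt_const x (1:ℝ)).sub (h1.exp.mul h2)).div_const (a^2)
    refine h3.congr_deriv ?_
    field_simp
    ring
  rw [intervalIntegral.integral_eq_sub_of_hasDerivAt (fun x _ => key x)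
    (by apply Continuous.intervalIntegrable; continuity)]
  norm_num

lemma exp_Ioi {r : ℝ} (hr : 0 < r) :
    ∫ τ in Set.Ioi (0:ℝ), Real.exp (-r*τ) = 1/r := by
  have hderiv : ∀ x ∈ Set.Ici (0:ℝ),
      HasDerivAt (fun y => -Real.exp (-r*y)/r) (Real.exp (-r*x)) x := by
    intro x _
    have h1 : HasDerivAt (fun y : ℝ => -r*y) (-r) x := by
      simpa using (hasDerivAt_id x).const_mul (-r)
    have h2 := (h1.exp.neg).div_const r
    refine h2.congr_deriv ?_
    field_simp
  have hint : IntegrableOn (fun x => Real.exp (-r*x)) (Set.Ioi (0:ℝ)) :=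
    exp_neg_integrableOn_Ioi 0 hr
  have htend : Filter.Tendsto (fun y => -Real.exp (-r*y)/r) Filter.atTop (nhds 0) := by
    have h0 : Filter.Tendsto (fun y : ℝ => r*y) Filter.atTop Filter.atTop :=
      Filter.Tendsto.const_mul_atTop hr Filter.tendsto_id
    have h1 : Filter.Tendsto (fun y : ℝ => -(r*y)) Filter.atTop Filter.atBot :=
      Filter.tendsto_neg_atTop_atBot.comp h0
    have h2 := ((Real.tendsto_exp_atBot.comp h1).neg).div_const r
    simp only [Function.comp_def, neg_zero, zero_div] at h2
    convert h2 using 2 with y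
    rw [neg_mul]
  have := integral_Ioi_of_hasDerivAt_of_tendsto'
    (f := fun y => -Real.exp (-r*y)/r) (f' := fun x => Real.exp (-r*x))
    (fun x hx => hderiv x hx) hint htend
  rw [this]
  field_simp
  simp

lemma log_antider {b f : ℝ} (hb : 0 < b) (hf : 0 < f) :
    ∫ s in (0:ℝ)..b, s/(f+s) = b + f*(Real.log f - Real.log (f+b)) := by
  have key : ∀ x ∈ Set.uIcc (0:ℝ) b,
      HasDerivAt (fun s => s - f*Real.log (f+s)) (x/(f+x)) x := by
    intro x hx
    rw [Set.uIcc_of_le hb.le] at hx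
    have hfx : 0 < f + x := by have := hx.1; linarith
    have h1 : HasDerivAt (fun s : ℝ => f + s) 1 x := by
      simpa using (hasDerivAt_id x).const_add f
    have h2 := (hasDerivAt_id x).sub ((h1.log hfx.ne').const_mul f)
    refine h2.congr_deriv ?_
    field_simp
    ring
  have hcont : IntervalIntegrable (fun s => s/(f+s)) volume 0 b := by
    apply ContinuousOn.intervalIntegrable
    apply ContinuousOn.div continuousOn_id (by fun_prop)
    intro x hx
    rw [Set.uIcc_of_le hb.le] at hx
    have := hx.1; positivity
  rw [intervalIntegral.integral_eq_sub_of_hasDerivAt key hcont]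
  norm_num
  ring

lemma slice_val {f : ℝ} (hf : 0 < f) {s : ℝ} (hs : 0 ≤ s) :
    ∫ τ in Set.Ioi (0:ℝ), s * Real.exp (-(f+s)*τ) = s/(f+s) := by
  rw [integral_const_mul, exp_Ioi (by linarith : (0:ℝ) < f + s)]
  rw [mul_one_div]

lemma fub_int {b f : ℝ} (hb : 0 < b) (hf : 0 < f) :
    Integrable (fun p : ℝ × ℝ => p.2 * Real.exp (-(f+p.2)*p.1))
      ((volume.restrict (Set.Ioi (0:ℝ))).prod (volume.restrict (Set.Ioo (0:ℝ) b))) := by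
  have hcont : Continuous (fun p : ℝ × ℝ => p.2 * Real.exp (-(f+p.2)*p.1)) := by
    fun_prop
  rw [integrable_prod_iff hcont.aestronglyMeasurable]
  constructor
  · refine Filter.Eventually.of_forall (fun τ => ?_)
    exact ((by fun_prop : Continuous (fun s : ℝ => s * Real.exp (-(f+s)*τ))).integrableOn_Icc (a := 0) (b := b) (μ := volume)).mono_set Set.Ioo_subset_Icc_self
  · have hmeas : AEStronglyMeasurable
        (fun τ => ∫ s in Set.Ioo (0:ℝ) b, ‖s * Real.exp (-(f+s)*τ)‖)
        (volume.restrict (Set.Ioi (0:ℝ))) := by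
      exact (hcont.norm.stronglyMeasurable.integral_prod_right').aestronglyMeasurable
    refine Integrable.mono' (g := fun τ => b * b * Real.exp (-f*τ)) ?_ hmeas ?_
    · exact ((exp_neg_integrableOn_Ioi 0 hf).const_mul (b*b))
    · rw [ae_restrict_iff' measurableSet_Ioi]
      refine Filter.Eventually.of_forall (fun τ hτ => ?_)
      have hτ0 : (0:ℝ) < τ := hτ
      have hb1 : ∀ x ∈ Set.Ioo (0:ℝ) b, ‖x * Real.exp (-(f+x)*τ)‖ ≤ b * Real.exp (-f*τ) := by
        intro x hx
        rw [Real.norm_eq_abs, abs_mul, abs_of_pos hx.1, abs_of_pos (Real.exp_pos _)]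
        have : Real.exp (-(f+x)*τ) ≤ Real.exp (-f*τ) := by
          apply Real.exp_le_exp.mpr
          nlinarith [hx.1]
        exact mul_le_mul hx.2.le this (Real.exp_pos _).le hb.le
      have hnn : 0 ≤ ∫ s in Set.Ioo (0:ℝ) b, ‖s * Real.exp (-(f+s)*τ)‖ :=
        integral_nonneg (fun s => norm_nonneg _)
      rw [Real.norm_eq_abs, abs_of_nonneg hnn]
      calc ∫ s in Set.Ioo (0:ℝ) b, ‖s * Real.exp (-(f+s)*τ)‖
          ≤ ∫ _s in Set.Ioo (0:ℝ) b, b * Real.exp (-f*τ) := by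
            refine setIntegral_mono_on ?_ ?_ measurableSet_Ioo hb1
            · exact (((by fun_prop : Continuous (fun s : ℝ => s * Real.exp (-(f+s)*τ))).integrableOn_Icc (a := 0) (b := b) (μ := volume)).mono_set Set.Ioo_subset_Icc_self).norm
            · exact integrableOn_const measure_Ioo_lt_top.ne
        _ = b * b * Real.exp (-f*τ) := by
            rw [setIntegral_const, Real.volume_real_Ioo_of_le hb.le, smul_eq_mul, sub_zero]
            ring

lemma s_slice {b f : ℝ} (hb : 0 < b) (hf : 0 < f) {τ : ℝ} (hτ : 0 < τ) :
    ∫ s in Set.Ioo (0:ℝ) b, s * Real.exp (-(f+s)*τ)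
      = Real.exp (-f*τ) * ((1 - Real.exp (-τ*b)*(1+τ*b))/τ^2) := by
  have h1 : ∀ s : ℝ, s * Real.exp (-(f+s)*τ)
      = Real.exp (-f*τ) * (s * Real.exp (-τ*s)) := by
    intro s
    rw [show (-(f+s)*τ) = (-f*τ) + (-τ*s) by ring, Real.exp_add]
    ring
  simp_rw [h1]
  rw [integral_const_mul]
  congr 1
  rw [← MeasureTheory.integral_Ioc_eq_integral_Ioo,
    ← intervalIntegral.integral_of_le hb.le, antider hτ b]

theorem stmt_7 (c b f : ℝ) (hb : 0 < b) (hf : 0 < f) :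
    ∫ τ₃ in Set.Ioi (0:ℝ), ∫ τ₂ in Set.Ioo 0 τ₃, ∫ _τ₁ in Set.Ioo 0 τ₂,
      (c / τ₃^2) * Real.exp (-b * τ₂) * Real.exp (-f * τ₃)
      = c / b + (c * f / b^2) * (Real.log f - Real.log (b + f)) := by
  have h1 : (∫ τ₃ in Set.Ioi (0:ℝ), ∫ τ₂ in Set.Ioo 0 τ₃, ∫ _τ₁ in Set.Ioo 0 τ₂,
      (c / τ₃^2) * Real.exp (-b * τ₂) * Real.exp (-f * τ₃))
      = ∫ τ₃ in Set.Ioi (0:ℝ), (c/b^2) * ∫ s in Set.Ioo (0:ℝ) b,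
          s * Real.exp (-(f+s)*τ₃) := by
    refine setIntegral_congr_fun measurableSet_Ioi (fun τ₃ hτ₃ => ?_)
    have hτ : (0:ℝ) < τ₃ := hτ₃
    have hmid : (∫ τ₂ in Set.Ioo 0 τ₃, ∫ _τ₁ in Set.Ioo 0 τ₂,
        (c / τ₃^2) * Real.exp (-b * τ₂) * Real.exp (-f * τ₃))
        = ∫ τ₂ in Set.Ioo 0 τ₃,
            ((c / τ₃^2) * Real.exp (-f * τ₃)) * (τ₂ * Real.exp (-b * τ₂)) := by
      refine setIntegral_congr_fun measurableSet_Ioo (fun τ₂ hτ₂ => ?_)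
      rw [setIntegral_const, Real.volume_real_Ioo_of_le hτ₂.1.le, smul_eq_mul, sub_zero]
      ring
    rw [hmid, integral_const_mul, ← MeasureTheory.integral_Ioc_eq_integral_Ioo,
      ← intervalIntegral.integral_of_le hτ.le, antider hb τ₃,
      s_slice hb hf hτ]
    have he : Real.exp (-τ₃*b) = Real.exp (-b*τ₃) := by ring_nf
    rw [he]
    field_simp
  rw [h1, integral_const_mul]
  have h2 : (∫ τ in Set.Ioi (0:ℝ), ∫ s in Set.Ioo (0:ℝ) b, s * Real.exp (-(f+s)*τ))
      = ∫ s in Set.Ioo (0:ℝ) b, ∫ τ in Set.Ioi (0:ℝ), s * Real.exp (-(f+s)*τ) :=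
    integral_integral_swap (fub_int hb hf)
  rw [h2]
  have h3 : (∫ s in Set.Ioo (0:ℝ) b, ∫ τ in Set.Ioi (0:ℝ), s * Real.exp (-(f+s)*τ))
      = ∫ s in Set.Ioo (0:ℝ) b, s/(f+s) := by
    refine setIntegral_congr_fun measurableSet_Ioo (fun s hs => ?_)
    exact slice_val hf hs.1.le
  rw [h3, ← MeasureTheory.integral_Ioc_eq_integral_Ioo,
    ← intervalIntegral.integral_of_le hb.le, log_antider hb hf]
  have he : Real.log (f + b) = Real.log (b + f) := by rw [add_comm]
  rw [he]
  field_simp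
end

section
/- For any real c and positive reals a, b, f, ∫₀^∞ ∫₀^{τ₃} ∫₀^{τ₂} (c/τ₃²) exp(-a τ₁) exp(-b τ₂) exp(-f τ₃) dτ₁ dτ₂ dτ₃ = (c/(ab(a+b))) · (a f log f − (a+b)(b+f) log(b+f) + b(a+b+f) log(a+b+f)). -/
open MeasureTheory Topology

open Set Filter in
/-- Interval integral of `exp (-(k*x))`. -/
lemma exp_int_aux (k u v : ℝ) (hk : k ≠ 0) :
    ∫ x in u..v, Real.exp (-(k*x)) = (Real.exp (-(k*u)) - Real.exp (-(k*v))) / k := by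
  have h : ∀ x ∈ Set.uIcc u v,
      HasDerivAt (fun x => -(Real.exp (-(k*x)) / k)) (Real.exp (-(k*x))) x := by
    intro x _
    have d1 : HasDerivAt (fun y : ℝ => -(k*y)) (-k) x := by
      simpa using ((hasDerivAt_id x).const_mul k).fun_neg
    have d2 := (d1.exp.div_const k).fun_neg
    refine d2.congr_deriv ?_
    field_simp
  rw [intervalIntegral.integral_eq_sub_of_hasDerivAt h
      (((Real.continuous_exp.comp (by fun_prop)).intervalIntegrable u v))]
  ring

open Set Filter in
lemma exp_tendsto_aux (k : ℝ) (hk : 0 < k) :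
    Tendsto (fun s : ℝ => Real.exp (-(k*s))) atTop (𝓝 0) :=
  Real.tendsto_exp_neg_atTop_nhds_zero.comp (Tendsto.const_mul_atTop hk tendsto_id)

open Set Filter in
lemma exp_mul_tendsto_aux (k : ℝ) (hk : 0 < k) :
    Tendsto (fun s : ℝ => (s*k) * Real.exp (-(s*k))) atTop (𝓝 0) := by
  have := (Real.tendsto_pow_mul_exp_neg_atTop_nhds_zero 1).comp
    (Tendsto.atTop_mul_const hk (tendsto_id (α := ℝ)))
  simpa [Function.comp_def] using this

open Set Filter in
/-- `∫_{p}^∞ (s-p) e^{-sτ} ds = e^{-pτ}/τ²`, plus integrability. -/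
lemma shift_int_aux (p τ : ℝ) (hτ : 0 < τ) :
    IntegrableOn (fun s => (s - p) * Real.exp (-(s*τ))) (Set.Ioi p) ∧
    ∫ s in Set.Ioi p, (s - p) * Real.exp (-(s*τ)) = Real.exp (-(p*τ)) / τ^2 := by
  set G : ℝ → ℝ := fun s => -(((s - p)/τ + 1/τ^2) * Real.exp (-(s*τ))) with hG
  have hτ0 : τ ≠ 0 := ne_of_gt hτ
  have hderiv : ∀ s : ℝ, HasDerivAt G ((s - p) * Real.exp (-(s*τ))) s := by
    intro s
    have d1 : HasDerivAt (fun s : ℝ => (s - p)/τ + 1/τ^2) (1/τ) s :=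
      (((hasDerivAt_id s).sub_const p).div_const τ).add_const (1/τ^2)
    have d2 : HasDerivAt (fun s : ℝ => Real.exp (-(s*τ))) (Real.exp (-(s*τ)) * (-τ)) s := by
      have : HasDerivAt (fun s : ℝ => -(s*τ)) (-τ) s := by
        simpa using ((hasDerivAt_id s).mul_const τ).fun_neg
      exact this.exp
    have := (d1.fun_mul d2).fun_neg
    refine this.congr_deriv ?_
    field_simp
    ring
  have hnonneg : ∀ s ∈ Set.Ioi p, 0 ≤ (s - p) * Real.exp (-(s*τ)) := by
    intro s hs
    have : (0:ℝ) ≤ s - p := by simp at hs; linarith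
    positivity
  have htends : Tendsto G atTop (𝓝 0) := by
    have e0 : Tendsto (fun s : ℝ => Real.exp (-(s*τ))) atTop (𝓝 0) := by
      have := exp_tendsto_aux τ hτ
      simpa [mul_comm] using this
    have e1 := exp_mul_tendsto_aux τ hτ
    have comb := (((e1.const_mul (1/τ^2)).sub (e0.const_mul (p/τ))).add
      (e0.const_mul (1/τ^2))).neg
    have : (fun s : ℝ => -((1/τ^2) * ((s*τ) * Real.exp (-(s*τ))) - (p/τ) * Real.exp (-(s*τ))
        + (1/τ^2) * Real.exp (-(s*τ)))) = G := by
      funext s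
      simp only [hG]
      field_simp
    rw [this] at comb
    simpa using comb
  have hcont : ContinuousWithinAt G (Set.Ici p) p :=
    (hderiv p).continuousAt.continuousWithinAt
  refine ⟨integrableOn_Ioi_deriv_of_nonneg hcont (fun s _ => hderiv s) hnonneg htends, ?_⟩
  rw [integral_Ioi_of_hasDerivAt_of_nonneg hcont (fun s _ => hderiv s) hnonneg htends]
  simp only [hG]
  field_simp
  ring

open Set Filter in
/-- `∫_0^∞ e^{-sτ} dτ = 1/s`, plus integrability. -/
lemma exp_Ioi_aux (s : ℝ) (hs : 0 < s) :
    IntegrableOn (fun τ => Real.exp (-(s*τ))) (Set.Ioi (0:ℝ)) ∧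
    ∫ τ in Set.Ioi (0:ℝ), Real.exp (-(s*τ)) = 1/s := by
  set G : ℝ → ℝ := fun τ => -(Real.exp (-(s*τ)) / s) with hG
  have hderiv : ∀ τ : ℝ, HasDerivAt G (Real.exp (-(s*τ))) τ := by
    intro τ
    have d1 : HasDerivAt (fun y : ℝ => -(s*y)) (-s) τ := by
      simpa using ((hasDerivAt_id τ).const_mul s).fun_neg
    have d2 := (d1.exp.div_const s).fun_neg
    refine d2.congr_deriv ?_
    field_simp
  have hnonneg : ∀ τ ∈ Set.Ioi (0:ℝ), 0 ≤ Real.exp (-(s*τ)) := fun τ _ => (Real.exp_pos _).le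
  have htends : Tendsto G atTop (𝓝 0) := by
    have := ((exp_tendsto_aux s hs).div_const s).neg
    simpa [hG, neg_div] using this
  have hcont : ContinuousWithinAt G (Set.Ici 0) 0 := (hderiv 0).continuousAt.continuousWithinAt
  refine ⟨integrableOn_Ioi_deriv_of_nonneg hcont (fun τ _ => hderiv τ) hnonneg htends, ?_⟩
  rw [integral_Ioi_of_hasDerivAt_of_nonneg hcont (fun τ _ => hderiv τ) hnonneg htends]
  simp [hG]

open Set Filter in
lemma piece_int_aux (x r c : ℝ) (hx : 0 < x) (hxr : x ≤ r) :
    ∫ s in Set.Ioc x r, c * (s - x) * (1/s)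
      = c * ((r - x) - x * (Real.log r - Real.log x)) := by
  rw [← intervalIntegral.integral_of_le hxr]
  have hsub : Set.uIcc x r ⊆ Set.Ioi (0:ℝ) := by
    rw [Set.uIcc_of_le hxr]
    intro y hy
    exact lt_of_lt_of_le hx hy.1
  have h : ∀ s ∈ Set.uIcc x r,
      HasDerivAt (fun s => c * (s - x * Real.log s)) (c * (s - x) * (1/s)) s := by
    intro s hs
    have hs0 : s ≠ 0 := ne_of_gt (hsub hs)
    have d := ((hasDerivAt_id s).fun_sub ((Real.hasDerivAt_log hs0).const_mul x)).const_mul c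
    refine d.congr_deriv ?_
    field_simp
  have hint : IntervalIntegrable (fun s => c * (s - x) * (1/s)) volume x r := by
    apply ContinuousOn.intervalIntegrable
    apply ContinuousOn.mul
    · fun_prop
    · exact continuousOn_const.div continuousOn_id (fun y hy => ne_of_gt (hsub hy))
  rw [intervalIntegral.integral_eq_sub_of_hasDerivAt h hint]
  ring

open Set Filter in
/-- The key improper integral. -/
lemma key_aux (p q r α β γ : ℝ) (hp : 0 < p) (hpq : p < q) (hqr : q < r)
    (h1 : α + β + γ = 0) (h2 : α*p + β*q + γ*r = 0) :
    ∫ τ in Set.Ioi (0:ℝ),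
      (α * Real.exp (-(p*τ)) + β * Real.exp (-(q*τ)) + γ * Real.exp (-(r*τ))) / τ^2
      = α*p*Real.log p + β*q*Real.log q + γ*r*Real.log r := by
  have hq : 0 < q := hp.trans hpq
  have hr : 0 < r := hq.trans hqr
  set w : ℝ → ℝ := fun s =>
    Set.indicator (Set.Ioi p) (fun s => α * (s - p)) s
    + Set.indicator (Set.Ioi q) (fun s => β * (s - q)) s
    + Set.indicator (Set.Ioi r) (fun s => γ * (s - r)) s with hw
  have hwmeas : Measurable w := by
    apply Measurable.add
    apply Measurable.add
    all_goals exact Measurable.indicator (by fun_prop) measurableSet_Ioi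
  have hwzero : ∀ s : ℝ, r < s → w s = 0 := by
    intro s hrs
    have h1s : s ∈ Set.Ioi p := by simp; linarith
    have h2s : s ∈ Set.Ioi q := by simp; linarith
    have h3s : s ∈ Set.Ioi r := by simp; linarith
    simp only [hw, Set.indicator_of_mem h1s, Set.indicator_of_mem h2s, Set.indicator_of_mem h3s]
    linear_combination s * h1 - h2
  -- generic piece integrability on Ioi 0 (for fixed τ > 0)
  have pieceInt : ∀ (x δ τ : ℝ), 0 < x → 0 < τ →
      Integrable ((Set.Ioi x).indicator (fun s => δ * (s - x) * Real.exp (-(s*τ))))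
        (volume.restrict (Set.Ioi (0:ℝ))) := by
    intro x δ τ hx hτ
    have h := (shift_int_aux x τ hτ).1
    have h2 : IntegrableOn (fun s => δ * (s - x) * Real.exp (-(s*τ))) (Set.Ioi x) :=
      IntegrableOn.congr_fun (h.const_mul δ) (fun s _ => by ring) measurableSet_Ioi
    exact (h2.integrable_indicator measurableSet_Ioi).integrableOn
  have pieceVal : ∀ (x δ τ : ℝ), 0 < x → 0 < τ →
      ∫ s in Set.Ioi (0:ℝ), (Set.Ioi x).indicator (fun s => δ * (s - x) * Real.exp (-(s*τ))) s
        = δ * (Real.exp (-(x*τ)) / τ^2) := by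
    intro x δ τ hx hτ
    rw [MeasureTheory.integral_indicator measurableSet_Ioi]
    rw [Measure.restrict_restrict measurableSet_Ioi, Set.Ioi_inter_Ioi,
      max_eq_left hx.le]
    rw [← (shift_int_aux x τ hτ).2, ← MeasureTheory.integral_const_mul]
    apply setIntegral_congr_fun measurableSet_Ioi
    intro s _; ring
  -- Step A : pointwise identity
  have stepA : ∀ τ ∈ Set.Ioi (0:ℝ),
      (α * Real.exp (-(p*τ)) + β * Real.exp (-(q*τ)) + γ * Real.exp (-(r*τ))) / τ^2
        = ∫ s in Set.Ioi (0:ℝ), w s * Real.exp (-(s*τ)) := by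
    intro τ hτ
    simp only [Set.mem_Ioi] at hτ
    have hrw : (fun s => w s * Real.exp (-(s*τ)))
        = fun s => (Set.Ioi p).indicator (fun s => α * (s - p) * Real.exp (-(s*τ))) s
          + (Set.Ioi q).indicator (fun s => β * (s - q) * Real.exp (-(s*τ))) s
          + (Set.Ioi r).indicator (fun s => γ * (s - r) * Real.exp (-(s*τ))) s := by
      funext s
      simp only [hw, add_mul, Set.indicator_mul_left]
    have i12 : Integrable (fun s =>
        (Set.Ioi p).indicator (fun s => α * (s - p) * Real.exp (-(s*τ))) s
          + (Set.Ioi q).indicator (fun s => β * (s - q) * Real.exp (-(s*τ))) s)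
        (volume.restrict (Set.Ioi (0:ℝ))) :=
      (pieceInt p α τ hp hτ).add (pieceInt q β τ hq hτ)
    rw [hrw, MeasureTheory.integral_add i12 (pieceInt r γ τ hr hτ),
      MeasureTheory.integral_add (pieceInt p α τ hp hτ) (pieceInt q β τ hq hτ),
      pieceVal p α τ hp hτ, pieceVal q β τ hq hτ, pieceVal r γ τ hr hτ]
    field_simp
  rw [setIntegral_congr_fun measurableSet_Ioi stepA]
  -- Step B : integrability on the product, and swap
  set C : ℝ := (|α| + |β| + |γ|) * (r - p) with hC
  have hC0 : 0 ≤ C := by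
    apply mul_nonneg
    · positivity
    · linarith
  have hbdd : Integrable
      (fun z : ℝ × ℝ => Real.exp (-(p * z.1)) * (Set.Ioc p r).indicator (fun _ => C) z.2)
      ((volume.restrict (Set.Ioi (0:ℝ))).prod (volume.restrict (Set.Ioi (0:ℝ)))) := by
    exact Integrable.mul_prod (f := fun t => Real.exp (-(p*t)))
      (g := (Set.Ioc p r).indicator (fun _ => C)) (exp_Ioi_aux p hp).1
      (((integrableOn_const measure_Ioc_lt_top.ne).integrable_indicator
        measurableSet_Ioc).integrableOn)
  have hprod : Integrable (fun z : ℝ × ℝ => w z.2 * Real.exp (-(z.2 * z.1)))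
      ((volume.restrict (Set.Ioi (0:ℝ))).prod (volume.restrict (Set.Ioi (0:ℝ)))) := by
    apply hbdd.mono'
    · apply Measurable.aestronglyMeasurable
      exact ((hwmeas.comp measurable_snd).mul
        ((measurable_snd.mul measurable_fst).neg.exp))
    · have hae : ∀ᵐ z ∂((volume.restrict (Set.Ioi (0:ℝ))).prod
          (volume.restrict (Set.Ioi (0:ℝ)))),
          z ∈ (Set.Ioi (0:ℝ)) ×ˢ (Set.Ioi (0:ℝ)) := by
        rw [Measure.prod_restrict]
        exact ae_restrict_mem (measurableSet_Ioi.prod measurableSet_Ioi)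
      filter_upwards [hae] with z hz
      obtain ⟨hz1, hz2⟩ := hz
      simp only [Set.mem_Ioi] at hz1 hz2
      set t := z.1; set s := z.2
      rcases le_or_gt s p with hsp | hps
      · have : w s = 0 := by
          have h1s : s ∉ Set.Ioi p := by simp; linarith
          have h2s : s ∉ Set.Ioi q := by simp; linarith
          have h3s : s ∉ Set.Ioi r := by simp; linarith
          simp [hw, Set.indicator_of_notMem, h1s, h2s, h3s]
        rw [this, zero_mul, norm_zero]
        exact mul_nonneg (Real.exp_pos _).le (Set.indicator_nonneg (fun _ _ => hC0) _)
      · rcases le_or_gt s r with hsr | hrs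
        · have hwb : |w s| ≤ C := by
            have b1 : |Set.indicator (Set.Ioi p) (fun s => α * (s - p)) s| ≤ |α| * (r - p) := by
              rw [Set.indicator_of_mem (by simp [hps])]
              rw [abs_mul]
              apply mul_le_mul_of_nonneg_left _ (abs_nonneg α)
              rw [abs_of_nonneg (by linarith)]
              linarith
            have b2 : |Set.indicator (Set.Ioi q) (fun s => β * (s - q)) s| ≤ |β| * (r - p) := by
              rcases le_or_gt s q with h | h
              · rw [Set.indicator_of_notMem (by simp only [Set.mem_Ioi, not_lt]; linarith)]
                rw [abs_zero]
                exact mul_nonneg (abs_nonneg _) (by linarith)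
              · rw [Set.indicator_of_mem (by simp [h])]
                rw [abs_mul]
                apply mul_le_mul_of_nonneg_left _ (abs_nonneg β)
                rw [abs_of_nonneg (by linarith)]
                linarith
            have b3 : |Set.indicator (Set.Ioi r) (fun s => γ * (s - r)) s| ≤ |γ| * (r - p) := by
              rw [Set.indicator_of_notMem (by simp only [Set.mem_Ioi, not_lt]; linarith)]
              rw [abs_zero]
              exact mul_nonneg (abs_nonneg _) (by linarith)
            calc |w s| ≤ _ + _ + _ := by
                  simp only [hw]
                  exact (abs_add_le _ _).trans (add_le_add_left (abs_add_le _ _) _)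
              _ ≤ |α| * (r - p) + |β| * (r - p) + |γ| * (r - p) := by
                  exact add_le_add (add_le_add b1 b2) b3
              _ = C := by rw [hC]; ring
          have hee : Real.exp (-(s * t)) ≤ Real.exp (-(p * t)) := by
            apply Real.exp_le_exp.mpr
            nlinarith
          rw [Set.indicator_of_mem (by exact ⟨hps, hsr⟩)]
          calc ‖w s * Real.exp (-(s * t))‖ = |w s| * Real.exp (-(s * t)) := by
                rw [norm_mul, Real.norm_eq_abs, Real.norm_eq_abs,
                  abs_of_pos (Real.exp_pos _)]
            _ ≤ C * Real.exp (-(p * t)) := by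
                apply mul_le_mul hwb hee (Real.exp_pos _).le hC0
            _ = Real.exp (-(p * t)) * C := by ring
        · rw [hwzero s hrs, zero_mul, norm_zero]
          exact mul_nonneg (Real.exp_pos _).le (Set.indicator_nonneg (fun _ _ => hC0) _)
  have swap := MeasureTheory.integral_integral_swap
    (f := fun τ s => w s * Real.exp (-(s * τ))) hprod
  rw [swap]
  -- Step D : inner τ integral
  have stepD : ∀ s ∈ Set.Ioi (0:ℝ),
      ∫ τ in Set.Ioi (0:ℝ), w s * Real.exp (-(s*τ)) = w s * (1/s) := by
    intro s hs
    simp only [Set.mem_Ioi] at hs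
    rw [MeasureTheory.integral_const_mul, (exp_Ioi_aux s hs).2]
  rw [setIntegral_congr_fun measurableSet_Ioi stepD]
  -- Step E : compute ∫ w s / s
  have hvanish : Set.EqOn (fun s => w s * (1/s))
      (Set.indicator (Set.Ioc 0 r) (fun s => w s * (1/s))) (Set.Ioi (0:ℝ)) := by
    intro s hs
    simp only [Set.mem_Ioi] at hs
    rcases le_or_gt s r with h | h
    · rw [Set.indicator_of_mem (by exact ⟨hs, h⟩)]
    · rw [Set.indicator_of_notMem (by simp; intro _; linarith)]
      simp [hwzero s h]
  rw [setIntegral_congr_fun measurableSet_Ioi hvanish,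
    MeasureTheory.integral_indicator measurableSet_Ioc,
    Measure.restrict_restrict measurableSet_Ioc,
    Set.inter_eq_left.mpr Set.Ioc_subset_Ioi_self]
  -- split the integral over Ioc 0 r into three pieces
  have hIocInt : ∀ (x δ : ℝ), 0 < x → x < r →
      Integrable ((Set.Ioi x).indicator (fun s => δ * (s - x) * (1/s)))
        (volume.restrict (Set.Ioc (0:ℝ) r)) := by
    intro x δ hx hxr
    rw [MeasureTheory.integrable_indicator_iff measurableSet_Ioi]
    have hset : Set.Ioi x ∩ Set.Ioc 0 r = Set.Ioc x r := by
      ext y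
      simp only [Set.mem_inter_iff, Set.mem_Ioi, Set.mem_Ioc]
      constructor
      · rintro ⟨h1, _, h3⟩; exact ⟨h1, h3⟩
      · rintro ⟨h1, h2⟩; exact ⟨h1, hx.trans h1, h2⟩
    rw [IntegrableOn, Measure.restrict_restrict measurableSet_Ioi, hset]
    have hc : ContinuousOn (fun s => δ * (s - x) * (1/s)) (Set.Icc x r) := by
      apply ContinuousOn.mul
      · fun_prop
      · exact continuousOn_const.div continuousOn_id
          (fun y hy => ne_of_gt (lt_of_lt_of_le hx hy.1))
    exact (hc.integrableOn_compact isCompact_Icc).mono_set Set.Ioc_subset_Icc_self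
  have hIocVal : ∀ (x δ : ℝ), 0 < x → x < r →
      ∫ s in Set.Ioc (0:ℝ) r, (Set.Ioi x).indicator (fun s => δ * (s - x) * (1/s)) s
        = δ * ((r - x) - x * (Real.log r - Real.log x)) := by
    intro x δ hx hxr
    rw [MeasureTheory.integral_indicator measurableSet_Ioi,
      Measure.restrict_restrict measurableSet_Ioi]
    have hset : Set.Ioi x ∩ Set.Ioc 0 r = Set.Ioc x r := by
      ext y
      simp only [Set.mem_inter_iff, Set.mem_Ioi, Set.mem_Ioc]
      constructor
      · rintro ⟨h1, _, h3⟩; exact ⟨h1, h3⟩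
      · rintro ⟨h1, h2⟩; exact ⟨h1, hx.trans h1, h2⟩
    rw [hset]
    exact piece_int_aux x r δ hx hxr.le
  have hrw2 : Set.EqOn (fun s => w s * (1/s))
      (fun s => (Set.Ioi p).indicator (fun s => α * (s - p) * (1/s)) s
        + (Set.Ioi q).indicator (fun s => β * (s - q) * (1/s)) s
        + (Set.Ioi r).indicator (fun s => γ * (s - r) * (1/s)) s) (Set.Ioc (0:ℝ) r) := by
    intro s _
    simp only [hw, add_mul, Set.indicator_mul_left]
  rw [setIntegral_congr_fun measurableSet_Ioc hrw2]
  have hrr : Set.EqOn ((Set.Ioi r).indicator (fun s => γ * (s - r) * (1/s)))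
      (fun _ => (0:ℝ)) (Set.Ioc (0:ℝ) r) := by
    intro s hs
    have hnm : s ∉ Set.Ioi r := by simp only [Set.mem_Ioi, not_lt]; exact hs.2
    simp [Set.indicator_of_notMem hnm]
  have j12 : Integrable (fun s =>
      (Set.Ioi p).indicator (fun s => α * (s - p) * (1/s)) s
        + (Set.Ioi q).indicator (fun s => β * (s - q) * (1/s)) s)
      (volume.restrict (Set.Ioc (0:ℝ) r)) :=
    (hIocInt p α hp (hpq.trans hqr)).add (hIocInt q β hq hqr)
  rw [MeasureTheory.integral_add j12
      ?_, MeasureTheory.integral_add (hIocInt p α hp (hpq.trans hqr)) (hIocInt q β hq hqr),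
    hIocVal p α hp (hpq.trans hqr), hIocVal q β hq hqr,
    setIntegral_congr_fun measurableSet_Ioc hrr]
  · simp only [integral_zero]
    linear_combination r * h1 - (1 + Real.log r) * h2
  · apply (integrable_zero _ _ _).congr
    exact Filter.EventuallyEq.symm (eventuallyEq_of_mem
      (self_mem_ae_restrict measurableSet_Ioc) hrr)

theorem stmt_8 (c a b f : ℝ) (ha : 0 < a) (hb : 0 < b) (hf : 0 < f) :
    ∫ τ₃ in Set.Ioi (0:ℝ), ∫ τ₂ in Set.Ioo 0 τ₃, ∫ τ₁ in Set.Ioo 0 τ₂,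
      (c / τ₃^2) * Real.exp (-a * τ₁) * Real.exp (-b * τ₂) * Real.exp (-f * τ₃)
      = (c / (a * b * (a + b))) *
        (a * f * Real.log f - (a + b) * (b + f) * Real.log (b + f)
          + b * (a + b + f) * Real.log (a + b + f)) := by
  have hab : (0:ℝ) < a + b := by linarith
  have habf : (0:ℝ) < a + b + f := by linarith
  have hbf : (0:ℝ) < b + f := by linarith
  have step : Set.EqOn
      (fun τ₃ => ∫ τ₂ in Set.Ioo 0 τ₃, ∫ τ₁ in Set.Ioo 0 τ₂,
        (c / τ₃^2) * Real.exp (-a * τ₁) * Real.exp (-b * τ₂) * Real.exp (-f * τ₃))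
      (fun τ₃ => (c/(a*b*(a+b))) *
        ((a * Real.exp (-(f*τ₃)) + (-(a+b)) * Real.exp (-((b+f)*τ₃))
          + b * Real.exp (-((a+b+f)*τ₃))) / τ₃^2)) (Set.Ioi (0:ℝ)) := by
    intro τ₃ hτ₃
    simp only [Set.mem_Ioi] at hτ₃
    have e1 : Set.EqOn
        (fun τ₂ => ∫ τ₁ in Set.Ioo 0 τ₂,
          (c / τ₃^2) * Real.exp (-a * τ₁) * Real.exp (-b * τ₂) * Real.exp (-f * τ₃))
        (fun τ₂ => (c / τ₃^2 * Real.exp (-(f*τ₃))) *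
          ((1/a) * Real.exp (-(b*τ₂)) - (1/a) * Real.exp (-((a+b)*τ₂))))
        (Set.Ioo (0:ℝ) τ₃) := by
      intro τ₂ hτ₂
      have h0 : (0:ℝ) < τ₂ := hτ₂.1
      have hfun : (fun τ₁ => (c / τ₃^2) * Real.exp (-a * τ₁) * Real.exp (-b * τ₂)
            * Real.exp (-f * τ₃))
          = fun τ₁ => ((c / τ₃^2) * Real.exp (-(b*τ₂)) * Real.exp (-(f*τ₃)))
            * Real.exp (-(a*τ₁)) := by
        funext τ₁
        rw [show -a*τ₁ = -(a*τ₁) by ring, show -b*τ₂ = -(b*τ₂) by ring,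
          show -f*τ₃ = -(f*τ₃) by ring]
        ring
      simp only [hfun]
      rw [MeasureTheory.integral_const_mul, ← MeasureTheory.integral_Ioc_eq_integral_Ioo,
        ← intervalIntegral.integral_of_le h0.le, exp_int_aux a 0 τ₂ (ne_of_gt ha)]
      rw [show -((a+b)*τ₂) = -(a*τ₂) + -(b*τ₂) by ring, Real.exp_add]
      simp only [mul_zero, neg_zero, Real.exp_zero]
      field_simp
    simp only
    rw [setIntegral_congr_fun measurableSet_Ioo e1, MeasureTheory.integral_const_mul,
      ← MeasureTheory.integral_Ioc_eq_integral_Ioo,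
      ← intervalIntegral.integral_of_le hτ₃.le]
    rw [intervalIntegral.integral_sub
        (((by fun_prop : Continuous fun τ₂ : ℝ => (1/a) * Real.exp (-(b*τ₂))).intervalIntegrable 0 τ₃))
        (((by fun_prop : Continuous fun τ₂ : ℝ => (1/a) * Real.exp (-((a+b)*τ₂))).intervalIntegrable 0 τ₃)),
      intervalIntegral.integral_const_mul, intervalIntegral.integral_const_mul,
      exp_int_aux b 0 τ₃ (ne_of_gt hb), exp_int_aux (a+b) 0 τ₃ (ne_of_gt hab)]
    rw [show -((b+f)*τ₃) = -(b*τ₃) + -(f*τ₃) by ring, Real.exp_add,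
      show -((a+b+f)*τ₃) = -((a+b)*τ₃) + -(f*τ₃) by ring, Real.exp_add]
    simp only [mul_zero, neg_zero, Real.exp_zero]
    have hτ₃0 : τ₃ ≠ 0 := ne_of_gt hτ₃
    field_simp
    ring
  rw [setIntegral_congr_fun measurableSet_Ioi step, MeasureTheory.integral_const_mul,
    key_aux f (b+f) (a+b+f) a (-(a+b)) b hf (by linarith) (by linarith) (by ring) (by ring)]
  ring
end
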